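/- The GLZ relation follows from the definition of interacting fields and symmetry of the T-products: with F_S := (ℏ/i) d/dλ|_{λ=0} S(S)^{⋆−1} ⋆ S(S + λF), one has (1/(iℏ))[G_S, F_S]_⋆ = d/dλ|_{λ=0} ( F_{S+λG} − G_{S+λF} ), where [A,B]_⋆ = A ⋆ B − B ⋆ A. -/

import Mathlib

/-- Bogoliubov's formula: the interacting field
`F_S := (ℏ/i) d/dλ|_{λ=0} [𝒮(S)^{⋆-1} ⋆ 𝒮(S + λF)]`. -/
noncomputable def intField {Loc A : Type*} [NormedAddCommGroup Loc] [NormedSpace ℂ Loc]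
    [NormedRing A] [NormedAlgebra ℂ A]
    (𝒮 : Loc → A) (ℏ : ℂ) (S F : Loc) : A :=
  (ℏ / Complex.I) • deriv (fun l : ℂ => Ring.inverse (𝒮 S) * 𝒮 (S + l • F)) 0

section Aux

variable {Loc A : Type*} [NormedAddCommGroup Loc] [NormedSpace ℂ Loc]
    [NormedRing A] [NormedAlgebra ℂ A] [CompleteSpace A]

/-- derivative of the straight path. -/
lemma path_hasDerivAt (S F : Loc) : HasDerivAt (fun l : ℂ => S + l • F) F 0 := by
  simpa using ((hasDerivAt_id (0 : ℂ)).smul_const F).const_add S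

lemma S_hasDerivAt (𝒮 : Loc → A) (hsmooth : ContDiff ℂ ⊤ 𝒮) (S F : Loc) :
    HasDerivAt (fun l : ℂ => 𝒮 (S + l • F)) (fderiv ℂ 𝒮 S F) 0 := by
  have h : HasFDerivAt 𝒮 (fderiv ℂ 𝒮 S) ((fun l : ℂ => S + l • F) 0) := by
    simpa using (hsmooth.differentiable (by simp) S).hasFDerivAt
  exact h.comp_hasDerivAt 0 (path_hasDerivAt S F)

lemma intField_eq (𝒮 : Loc → A) (hsmooth : ContDiff ℂ ⊤ 𝒮) (ℏ : ℂ) (S F : Loc) :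
    intField 𝒮 ℏ S F = (ℏ / Complex.I) • (Ring.inverse (𝒮 S) * fderiv ℂ 𝒮 S F) := by
  unfold intField
  rw [((S_hasDerivAt 𝒮 hsmooth S F).const_mul (Ring.inverse (𝒮 S))).deriv]

/-- derivative of `l ↦ Ring.inverse (𝒮 (S + l • G))` at `0`. -/
lemma inv_hasDerivAt (𝒮 : Loc → A) (hsmooth : ContDiff ℂ ⊤ 𝒮) (hunit : ∀ X, IsUnit (𝒮 X))
    (S G : Loc) :
    HasDerivAt (fun l : ℂ => Ring.inverse (𝒮 (S + l • G)))
      (-(Ring.inverse (𝒮 S) * fderiv ℂ 𝒮 S G * Ring.inverse (𝒮 S))) 0 := by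
  have hu : Ring.inverse (𝒮 S) = ↑(hunit S).unit⁻¹ := by
    rw [← Ring.inverse_unit]; exact congrArg _ (hunit S).unit_spec.symm
  have hinv : HasFDerivAt Ring.inverse
      (-ContinuousLinearMap.mulLeftRight ℂ A ↑(hunit S).unit⁻¹ ↑(hunit S).unit⁻¹)
      ((fun l : ℂ => 𝒮 (S + l • G)) 0) := by
    simpa [(hunit S).unit_spec] using hasFDerivAt_ringInverse (𝕜 := ℂ) (hunit S).unit
  have := hinv.comp_hasDerivAt 0 (S_hasDerivAt 𝒮 hsmooth S G)
  simpa [hu, ContinuousLinearMap.mulLeftRight_apply, Function.comp_def] using this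

/-- derivative of `l ↦ (fderiv ℂ 𝒮 (S + l • G)) F` at `0`. -/
lemma fderiv_hasDerivAt (𝒮 : Loc → A) (hsmooth : ContDiff ℂ ⊤ 𝒮) (S F G : Loc) :
    HasDerivAt (fun l : ℂ => fderiv ℂ 𝒮 (S + l • G) F)
      (fderiv ℂ (fderiv ℂ 𝒮) S G F) 0 := by
  have hD : ContDiff ℂ ⊤ (fderiv ℂ 𝒮) := hsmooth.fderiv_right le_top
  have h1 : HasFDerivAt (fderiv ℂ 𝒮) (fderiv ℂ (fderiv ℂ 𝒮) S)
      ((fun l : ℂ => S + l • G) 0) := by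
    simpa using (hD.differentiable (by simp) S).hasFDerivAt
  have h2 : HasDerivAt (fun l : ℂ => fderiv ℂ 𝒮 (S + l • G))
      (fderiv ℂ (fderiv ℂ 𝒮) S G) 0 := h1.comp_hasDerivAt 0 (path_hasDerivAt S G)
  simpa using h2.clm_apply (hasDerivAt_const 0 F)

/-- derivative of `l ↦ intField 𝒮 ℏ (S + l • G) F` at `0`. -/
lemma intField_hasDerivAt (𝒮 : Loc → A) (hsmooth : ContDiff ℂ ⊤ 𝒮)
    (hunit : ∀ X, IsUnit (𝒮 X)) (ℏ : ℂ) (S F G : Loc) :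
    HasDerivAt (fun l : ℂ => intField 𝒮 ℏ (S + l • G) F)
      ((ℏ / Complex.I) •
        (-(Ring.inverse (𝒮 S) * fderiv ℂ 𝒮 S G * Ring.inverse (𝒮 S)) * fderiv ℂ 𝒮 S F
          + Ring.inverse (𝒮 S) * fderiv ℂ (fderiv ℂ 𝒮) S G F)) 0 := by
  have h := ((inv_hasDerivAt 𝒮 hsmooth hunit S G).mul
    (fderiv_hasDerivAt 𝒮 hsmooth S F G)).const_smul (ℏ / Complex.I)
  have heq : (fun l : ℂ => intField 𝒮 ℏ (S + l • G) F)
      = fun l : ℂ => (ℏ / Complex.I) •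
        (Ring.inverse (𝒮 (S + l • G)) * fderiv ℂ 𝒮 (S + l • G) F) := by
    funext l; exact intField_eq 𝒮 hsmooth ℏ (S + l • G) F
  rw [heq]
  rw [Pi.smul_def, Pi.mul_def] at h
  simpa using h

end Aux

/-- GLZ relation: for interacting fields defined by Bogoliubov's formula
from a (smooth, invertible-valued) generating functional `𝒮` — built from symmetric
time-ordered products, so that `𝒮` is a genuine function of its argument — one has
`(1/(iℏ)) [G_S, F_S]_⋆ = d/dλ|_{λ=0} (F_{S+λG} − G_{S+λF})`. -/
theorem stmt19 {Loc A : Type*} [NormedAddCommGroup Loc] [NormedSpace ℂ Loc]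
    [NormedRing A] [NormedAlgebra ℂ A] [CompleteSpace A]
    (𝒮 : Loc → A) (hsmooth : ContDiff ℂ ⊤ 𝒮) (hunit : ∀ X, IsUnit (𝒮 X))
    (ℏ : ℂ) (hℏ : ℏ ≠ 0) (S F G : Loc) :
    (Complex.I * ℏ)⁻¹ •
        (intField 𝒮 ℏ S G * intField 𝒮 ℏ S F - intField 𝒮 ℏ S F * intField 𝒮 ℏ S G)
      = deriv (fun l : ℂ => intField 𝒮 ℏ (S + l • G) F - intField 𝒮 ℏ (S + l • F) G) 0 := by
  have hd := ((intField_hasDerivAt 𝒮 hsmooth hunit ℏ S F G).sub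
    (intField_hasDerivAt 𝒮 hsmooth hunit ℏ S G F)).deriv
  rw [Pi.sub_def] at hd
  rw [hd, intField_eq 𝒮 hsmooth ℏ S F, intField_eq 𝒮 hsmooth ℏ S G]
  have hsym : fderiv ℂ (fderiv ℂ 𝒮) S G F = fderiv ℂ (fderiv ℂ 𝒮) S F G :=
    (hsmooth.contDiffAt.isSymmSndFDerivAt (by exact_mod_cast le_top)) G F
  set u := Ring.inverse (𝒮 S)
  set dF := fderiv ℂ 𝒮 S F
  set dG := fderiv ℂ 𝒮 S G
  rw [hsym]
  rw [smul_mul_smul_comm, smul_mul_smul_comm, ← smul_sub, ← smul_sub, smul_smul]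
  have hscal : (Complex.I * ℏ)⁻¹ * (ℏ / Complex.I * (ℏ / Complex.I)) = -(ℏ / Complex.I) := by
    have hI : Complex.I ≠ 0 := Complex.I_ne_zero
    field_simp
    ring_nf
    simp [Complex.I_sq]
  rw [hscal]
  have : -(u * dG * u) * dF + u * fderiv ℂ (fderiv ℂ 𝒮) S F G
        - (-(u * dF * u) * dG + u * fderiv ℂ (fderiv ℂ 𝒮) S F G)
      = -(u * dG * (u * dF) - u * dF * (u * dG)) := by
    noncomm_ring
  rw [this, smul_neg, neg_smul]
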